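/- arXiv:1005.3758 — 2 statements merged into one kernel-verified Lean document; each statement's English description precedes it below -/
import Mathlib

section
/- Let β_A, β_H > 0, α_A, α_H ≥ 0 with either (α_A = α_H = 0 and β_A ≠ β_H) (class P_NI) or (α_A, α_H > 0, β_A ≠ β_H, α_A ≠ α_H and β_A/β_H = α_A/α_H) (class P_SP,1). Then for every λ ∈ (0,1), every initial size ω₀ ≥ 1 and every horizon n ≥ 1, the Hellinger integral has the exact value H_{λ,n} = exp( a_n^{(q_λ^E)}·ω₀ + (α_A/β_A)·Σ_{k=1}^{n} a_k^{(q_λ^E)} ), where q_λ^E := β_A^λ·β_H^{1−λ}; moreover α_A/β_A may equivalently be replaced by α_H/β_H. -/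
open Real Filter

/-- One transition weight of the Poisson Galton–Watson process with immigration:
probability that the next generation size is `y` given the previous size is `x`. -/
noncomputable def gwStep (β α : ℝ) (x y : ℕ) : ℝ :=
  Real.exp (-(β * (x : ℝ) + α)) * (β * (x : ℝ) + α) ^ y / (Nat.factorial y : ℝ)

/-- The `n`-step path law (pmf on `Fin n → ℕ`) with initial generation size `ω₀`. -/
noncomputable def gwPath (β α : ℝ) (ω₀ n : ℕ) (ω : Fin n → ℕ) : ℝ :=
  ∏ k : Fin n,
    gwStep β α
      (if (k : ℕ) = 0 then ω₀ else ω ⟨(k : ℕ) - 1, Nat.lt_of_le_of_lt (Nat.sub_le _ _) k.2⟩)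
      (ω k)

/-- Hellinger integral of order `lam` between the `n`-step path laws. -/
noncomputable def hellinger (βA αA βH αH lam : ℝ) (ω₀ n : ℕ) : ℝ :=
  ∑' ω : Fin n → ℕ, gwPath βA αA ω₀ n ω ^ lam * gwPath βH αH ω₀ n ω ^ (1 - lam)

/-- The recursion `a₀ = 0`, `a_{n+1} = q·e^{a_n} − βl`. -/
noncomputable def aSeq (q βl : ℝ) : ℕ → ℝ
  | 0 => 0
  | n + 1 => q * Real.exp (aSeq q βl n) - βl

/-- The recursion `b₀ = 0`, `b_{n+1} = p·e^{a_n} − αl`. -/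
noncomputable def bSeq (p q βl αl : ℝ) : ℕ → ℝ
  | 0 => 0
  | n + 1 => p * Real.exp (aSeq q βl n) - αl

/-! ### Auxiliary development -/

/-- The common single-step weight appearing in the Hellinger integrand. -/
noncomputable def wgt (q βl c : ℝ) (x y : ℕ) : ℝ :=
  Real.exp (-(βl * ((x : ℝ) + c))) * (q * ((x : ℝ) + c)) ^ y / (Nat.factorial y : ℝ)

/-- Path product of the single-step weights. -/
noncomputable def wPath (q βl c : ℝ) (x n : ℕ) (ω : Fin n → ℕ) : ℝ :=
  ∏ k : Fin n,
    wgt q βl c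
      (if (k : ℕ) = 0 then x else ω ⟨(k : ℕ) - 1, Nat.lt_of_le_of_lt (Nat.sub_le _ _) k.2⟩)
      (ω k)

lemma cons_mk_succ {n : ℕ} (y : ℕ) (ρ : Fin n → ℕ) (j : ℕ) (h : j < n) (h' : j + 1 < n + 1) :
    (Fin.cons y ρ : Fin (n+1) → ℕ) ⟨j + 1, h'⟩ = ρ ⟨j, h⟩ := by
  have : (⟨j + 1, h'⟩ : Fin (n + 1)) = Fin.succ ⟨j, h⟩ := rfl
  rw [this, Fin.cons_succ]

lemma wgt_nonneg {q βl c : ℝ} (hq : 0 ≤ q) (hc : 0 ≤ c) (x y : ℕ) : 0 ≤ wgt q βl c x y := by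
  have h : (0:ℝ) ≤ (x : ℝ) + c := by positivity
  unfold wgt
  positivity

lemma wPath_nonneg {q βl c : ℝ} (hq : 0 ≤ q) (hc : 0 ≤ c) (x n : ℕ) (ω : Fin n → ℕ) :
    0 ≤ wPath q βl c x n ω :=
  Finset.prod_nonneg fun _ _ => wgt_nonneg hq hc _ _

lemma wPath_cons (q βl c : ℝ) (x n : ℕ) (y : ℕ) (ρ : Fin n → ℕ) :
    wPath q βl c x (n+1) (Fin.cons y ρ) = wgt q βl c x y * wPath q βl c y n ρ := by
  unfold wPath
  rw [Fin.prod_univ_succ]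
  congr 1
  refine Finset.prod_congr rfl fun j _ => ?_
  rw [Fin.cons_succ]
  rcases j with ⟨j, hj⟩
  cases j with
  | zero => simp
  | succ i =>
      have hs : ((Fin.succ ⟨i+1, hj⟩ : Fin (n+1)) : ℕ) = i + 2 := rfl
      simp only [hs, if_neg (Nat.succ_ne_zero _), Nat.add_sub_cancel]
      rfl

lemma exp_series (r : ℝ) : ∑' y : ℕ, r ^ y / (Nat.factorial y : ℝ) = Real.exp r := by
  rw [Real.exp_eq_exp_ℝ, NormedSpace.exp_eq_tsum_div]

/-- The key induction: summability and closed form for the path sum. -/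
lemma wPath_tsum (q βl c : ℝ) (hq : 0 ≤ q) (hc : 0 ≤ c) :
    ∀ n, ∀ x : ℕ,
      Summable (wPath q βl c x n) ∧
      ∑' ω : Fin n → ℕ, wPath q βl c x n ω =
        Real.exp (aSeq q βl n * (x : ℝ) + c * ∑ k ∈ Finset.Icc 1 n, aSeq q βl k) := by
  intro n
  induction n with
  | zero =>
      intro x
      constructor
      · exact Summable.of_finite
      · have h1 : ∀ ω : Fin 0 → ℕ, wPath q βl c x 0 ω = 1 := fun ω => by
          simp [wPath]
        simp [tsum_congr h1, aSeq, h1]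
  | succ n IH =>
      intro x
      set a := aSeq q βl n with ha
      set T := ∑ k ∈ Finset.Icc 1 n, aSeq q βl k with hT
      -- pointwise identity for the y-sum
      have hpt : ∀ y : ℕ, wgt q βl c x y * Real.exp (a * (y : ℝ) + c * T) =
          Real.exp (c * T + -(βl * ((x : ℝ) + c))) *
            ((q * ((x : ℝ) + c) * Real.exp a) ^ y / (Nat.factorial y : ℝ)) := by
        intro y
        unfold wgt
        rw [Real.exp_add, mul_comm a ((y : ℝ)), Real.exp_nat_mul, Real.exp_add,
          mul_pow (q * ((x : ℝ) + c)) (Real.exp a) y]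
        ring
      -- summability in y of the mixed term
      have hsum_y : Summable (fun y : ℕ => wgt q βl c x y * Real.exp (a * (y : ℝ) + c * T)) := by
        apply Summable.congr (f := fun y : ℕ =>
          Real.exp (c * T + -(βl * ((x : ℝ) + c))) *
            ((q * ((x : ℝ) + c) * Real.exp a) ^ y / (Nat.factorial y : ℝ)))
        · exact (Real.summable_pow_div_factorial _).mul_left _
        · intro y; exact (hpt y).symm
      -- value of the y-sum
      have hval_y : ∑' y : ℕ, wgt q βl c x y * Real.exp (a * (y : ℝ) + c * T) =
          Real.exp (aSeq q βl (n+1) * (x : ℝ) +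
            c * ∑ k ∈ Finset.Icc 1 (n+1), aSeq q βl k) := by
        rw [tsum_congr hpt, tsum_mul_left, exp_series, ← Real.exp_add]
        congr 1
        rw [Finset.sum_Icc_succ_top (by omega : 1 ≤ n + 1)]
        show c * T + -(βl * ((x : ℝ) + c)) + q * ((x : ℝ) + c) * Real.exp a =
          (q * Real.exp a - βl) * (x : ℝ) + c * (T + (q * Real.exp a - βl))
        ring
      -- the equivalence splitting off the first coordinate
      set e : (ℕ × (Fin n → ℕ)) ≃ (Fin (n+1) → ℕ) := Fin.consEquiv (fun _ => ℕ) with he'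
      have he : ∀ p : ℕ × (Fin n → ℕ), e p = Fin.cons p.1 p.2 := fun p => by
        rw [he']; rfl
      have hF : ∀ p : ℕ × (Fin n → ℕ), wPath q βl c x (n+1) (e p) =
          wgt q βl c x p.1 * wPath q βl c p.1 n p.2 := by
        intro p; rw [he]; exact wPath_cons q βl c x n p.1 p.2
      have hFnonneg : ∀ p : ℕ × (Fin n → ℕ),
          0 ≤ wgt q βl c x p.1 * wPath q βl c p.1 n p.2 := fun p =>
        mul_nonneg (wgt_nonneg hq hc _ _) (wPath_nonneg hq hc _ _ _)
      have h1 : ∀ y : ℕ, Summable fun ρ : Fin n → ℕ => wgt q βl c x y * wPath q βl c y n ρ :=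
        fun y => ((IH y).1).mul_left _
      have hinner : ∀ y : ℕ, ∑' ρ : Fin n → ℕ, wgt q βl c x y * wPath q βl c y n ρ =
          wgt q βl c x y * Real.exp (a * (y : ℝ) + c * T) := by
        intro y
        rw [tsum_mul_left, (IH y).2]
      have hsum_prod : Summable (fun p : ℕ × (Fin n → ℕ) =>
          wgt q βl c x p.1 * wPath q βl c p.1 n p.2) := by
        rw [summable_prod_of_nonneg hFnonneg]
        constructor
        · intro y
          exact h1 y
        · show Summable fun y : ℕ => ∑' ρ : Fin n → ℕ, wgt q βl c x y * wPath q βl c y n ρ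
          exact hsum_y.congr fun y => (hinner y).symm
      have hsum : Summable (wPath q βl c x (n+1)) :=
        (Equiv.summable_iff e (f := wPath q βl c x (n+1))).mp
          (hsum_prod.congr fun p => (hF p).symm)
      refine ⟨hsum, ?_⟩
      calc ∑' ω : Fin (n+1) → ℕ, wPath q βl c x (n+1) ω
          = ∑' p : ℕ × (Fin n → ℕ), wPath q βl c x (n+1) (e p) := (e.tsum_eq (wPath q βl c x (n+1))).symm
        _ = ∑' p : ℕ × (Fin n → ℕ), wgt q βl c x p.1 * wPath q βl c p.1 n p.2 :=
            tsum_congr hF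
        _ = ∑' (y : ℕ) (ρ : Fin n → ℕ), wgt q βl c x y * wPath q βl c y n ρ :=
            Summable.tsum_prod' hsum_prod h1
        _ = ∑' y : ℕ, wgt q βl c x y * Real.exp (a * (y : ℝ) + c * T) :=
            tsum_congr hinner
        _ = _ := hval_y

lemma rpow_pow_comm {a : ℝ} (ha : 0 ≤ a) (lam : ℝ) (y : ℕ) :
    ((a ^ y : ℝ) : ℝ) ^ lam = (a ^ lam) ^ y := by
  rw [← Real.rpow_natCast a y, ← Real.rpow_natCast (a ^ lam) y, ← Real.rpow_mul ha,
    ← Real.rpow_mul ha, mul_comm]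

lemma gwStep_nonneg {β α : ℝ} (hβ : 0 ≤ β) (hα : 0 ≤ α) (x y : ℕ) : 0 ≤ gwStep β α x y := by
  have h : (0:ℝ) ≤ β * (x : ℝ) + α := by positivity
  unfold gwStep
  positivity

lemma step_eq (βA βH c lam : ℝ) (hβA : 0 < βA) (hβH : 0 < βH) (hc : 0 ≤ c)
    (hlam0 : 0 < lam) (hlam1 : lam < 1) (x y : ℕ) :
    gwStep βA (c * βA) x y ^ lam * gwStep βH (c * βH) x y ^ (1 - lam) =
      wgt (βA ^ lam * βH ^ (1 - lam)) (lam * βA + (1 - lam) * βH) c x y := by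
  have hx : (0:ℝ) ≤ (x : ℝ) + c := by positivity
  have hfA : βA * (x:ℝ) + c * βA = βA * ((x:ℝ) + c) := by ring
  have hfH : βH * (x:ℝ) + c * βH = βH * ((x:ℝ) + c) := by ring
  have hl1 : lam + (1 - lam) = 1 := by ring
  have hl0 : lam + (1 - lam) ≠ 0 := by rw [hl1]; norm_num
  have hsA : (0:ℝ) ≤ βA * ((x:ℝ) + c) := by positivity
  have hsH : (0:ℝ) ≤ βH * ((x:ℝ) + c) := by positivity
  have hfac : (0:ℝ) < (Nat.factorial y : ℝ) := by exact_mod_cast Nat.factorial_pos y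
  unfold gwStep wgt
  rw [hfA, hfH]
  rw [Real.div_rpow (by positivity) hfac.le, Real.div_rpow (by positivity) hfac.le,
    Real.mul_rpow (Real.exp_pos _).le (by positivity),
    Real.mul_rpow (Real.exp_pos _).le (by positivity)]
  have hE : Real.exp (-(βA * ((x:ℝ) + c))) ^ lam * Real.exp (-(βH * ((x:ℝ) + c))) ^ (1 - lam) =
      Real.exp (-((lam * βA + (1 - lam) * βH) * ((x:ℝ) + c))) := by
    rw [← Real.exp_mul, ← Real.exp_mul, ← Real.exp_add]
    congr 1
    ring
  have hP : ((βA * ((x:ℝ) + c)) ^ y : ℝ) ^ lam * ((βH * ((x:ℝ) + c)) ^ y : ℝ) ^ (1 - lam) =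
      (βA ^ lam * βH ^ (1 - lam) * ((x:ℝ) + c)) ^ y := by
    rw [_root_.rpow_pow_comm hsA, _root_.rpow_pow_comm hsH, ← mul_pow]
    congr 1
    rw [Real.mul_rpow hβA.le hx, Real.mul_rpow hβH.le hx]
    calc βA ^ lam * ((x:ℝ) + c) ^ lam * (βH ^ (1 - lam) * ((x:ℝ) + c) ^ (1 - lam))
        = βA ^ lam * βH ^ (1 - lam) * (((x:ℝ) + c) ^ lam * ((x:ℝ) + c) ^ (1 - lam)) := by ring
      _ = βA ^ lam * βH ^ (1 - lam) * ((x:ℝ) + c) := by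
          rw [← Real.rpow_add' hx hl0, hl1, Real.rpow_one]
  have hFc : ((Nat.factorial y : ℝ)) ^ lam * ((Nat.factorial y : ℝ)) ^ (1 - lam) =
      (Nat.factorial y : ℝ) := by
    rw [← Real.rpow_add' hfac.le hl0, hl1, Real.rpow_one]
  calc Real.exp (-(βA * ((x:ℝ)+c))) ^ lam * ((βA * ((x:ℝ)+c)) ^ y : ℝ) ^ lam /
        ((Nat.factorial y : ℝ)) ^ lam *
        (Real.exp (-(βH * ((x:ℝ)+c))) ^ (1-lam) * ((βH * ((x:ℝ)+c)) ^ y : ℝ) ^ (1-lam) /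
        ((Nat.factorial y : ℝ)) ^ (1-lam))
      = (Real.exp (-(βA * ((x:ℝ)+c))) ^ lam * Real.exp (-(βH * ((x:ℝ)+c))) ^ (1-lam)) *
        (((βA * ((x:ℝ)+c)) ^ y : ℝ) ^ lam * ((βH * ((x:ℝ)+c)) ^ y : ℝ) ^ (1-lam)) /
        (((Nat.factorial y : ℝ)) ^ lam * ((Nat.factorial y : ℝ)) ^ (1-lam)) := by ring
    _ = _ := by rw [hE, hP, hFc]

/-- For parameters in `P_NI` (no immigration, `β_A ≠ β_H`) or `P_SP,1`
(strictly positive parameters with `β_A ≠ β_H`, `α_A ≠ α_H`, `β_A/β_H = α_A/α_H`),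
the Hellinger integral has the exact recursively computable value
`H_{λ,n} = exp(a_n^{(q_λ^E)}·ω₀ + (α_A/β_A)·Σ_{k=1}^n a_k^{(q_λ^E)})`, where
`q_λ^E = β_A^λ·β_H^{1−λ}`; moreover `α_A/β_A` may be replaced by `α_H/β_H`. -/
theorem hellinger_exact_value (βA βH αA αH : ℝ) (hβA : 0 < βA) (hβH : 0 < βH)
    (hαA : 0 ≤ αA) (hαH : 0 ≤ αH)
    (hclass : (αA = 0 ∧ αH = 0 ∧ βA ≠ βH) ∨
      (0 < αA ∧ 0 < αH ∧ βA ≠ βH ∧ αA ≠ αH ∧ βA / βH = αA / αH))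
    (lam : ℝ) (hlam : lam ∈ Set.Ioo (0 : ℝ) 1)
    (ω₀ : ℕ) (hω₀ : 1 ≤ ω₀) (n : ℕ) (hn : 1 ≤ n) :
    hellinger βA αA βH αH lam ω₀ n =
      Real.exp (aSeq (βA ^ lam * βH ^ (1 - lam)) (lam * βA + (1 - lam) * βH) n * (ω₀ : ℝ)
        + (αA / βA) *
          ∑ k ∈ Finset.Icc 1 n, aSeq (βA ^ lam * βH ^ (1 - lam)) (lam * βA + (1 - lam) * βH) k) ∧
    hellinger βA αA βH αH lam ω₀ n =
      Real.exp (aSeq (βA ^ lam * βH ^ (1 - lam)) (lam * βA + (1 - lam) * βH) n * (ω₀ : ℝ)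
        + (αH / βH) *
          ∑ k ∈ Finset.Icc 1 n, aSeq (βA ^ lam * βH ^ (1 - lam)) (lam * βA + (1 - lam) * βH) k) := by
  obtain ⟨hlam0, hlam1⟩ := hlam
  set q : ℝ := βA ^ lam * βH ^ (1 - lam) with hqdef
  set βl : ℝ := lam * βA + (1 - lam) * βH with hβldef
  set c : ℝ := αA / βA with hcdef
  have hc : 0 ≤ c := div_nonneg hαA hβA.le
  have hq : 0 ≤ q := by
    rw [hqdef]
    exact mul_nonneg (Real.rpow_nonneg hβA.le _) (Real.rpow_nonneg hβH.le _)
  have hA : αA = c * βA := by rw [hcdef]; field_simp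
  have hH : αH = c * βH := by
    rcases hclass with ⟨h1, h2, _⟩ | ⟨h1, h2, _, _, h5⟩
    · rw [h2, hcdef, h1]; simp
    · have hcross : βA * αH = αA * βH := by
        rw [div_eq_div_iff hβH.ne' h2.ne'] at h5
        linarith
      rw [hcdef]
      field_simp
      linarith
  have hcH : αH / βH = c := by rw [hH]; field_simp
  have key : hellinger βA αA βH αH lam ω₀ n =
      Real.exp (aSeq q βl n * (ω₀ : ℝ) + c * ∑ k ∈ Finset.Icc 1 n, aSeq q βl k) := by
    unfold hellinger
    have hps : ∀ ω : Fin n → ℕ,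
        gwPath βA αA ω₀ n ω ^ lam * gwPath βH αH ω₀ n ω ^ (1 - lam) = wPath q βl c ω₀ n ω := by
      intro ω
      unfold gwPath wPath
      rw [← Real.finset_prod_rpow _ _
          (fun i _ => gwStep_nonneg hβA.le hαA _ _) lam,
        ← Real.finset_prod_rpow _ _
          (fun i _ => gwStep_nonneg hβH.le hαH _ _) (1 - lam),
        ← Finset.prod_mul_distrib]
      refine Finset.prod_congr rfl fun k _ => ?_
      rw [hA, hH, hqdef, hβldef]
      exact step_eq βA βH c lam hβA hβH hc hlam0 hlam1 _ _
    rw [tsum_congr hps, (wPath_tsum q βl c hq hc n ω₀).2]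
  refine ⟨key, ?_⟩
  rw [hcH]
  exact key
end

section
/- Let β_A, β_H > 0, α_A, α_H > 0 with β_A ≠ β_H, α_A ≠ α_H and β_A/β_H = α_A/α_H (class P_SP,1), let λ ∈ (0,1) and ω₀ ≥ 1, and set q_λ^E := β_A^λ·β_H^{1−λ} (so 0 < q_λ^E < β_λ). Then: (a) H_{λ,1} = exp( (β_A^λ·β_H^{1−λ} − λβ_A − (1−λ)β_H)·(ω₀ + α_A/β_A) ) < 1; (b) H_{λ,n} = exp( a_n^{(q_λ^E)}·ω₀ + (α_A/β_A)·Σ_{k=1}^{n} a_k^{(q_λ^E)} ) for all n ≥ 1, and this sequence is strictly decreasing in n; (c) lim_{n→∞} H_{λ,n} = 0; (d) lim_{n→∞} (1/n)·log H_{λ,n} = (α_A/β_A)·x₀^{(q_λ^E)}. -/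
open Real Filter

namespace HellAux

noncomputable def mstep (βA αA βH αH lam : ℝ) (x y : ℕ) : ℝ :=
  gwStep βA αA x y ^ lam * gwStep βH αH x y ^ (1 - lam)

noncomputable def mpath (βA αA βH αH lam : ℝ) (x n : ℕ) (ω : Fin n → ℕ) : ℝ :=
  ∏ k : Fin n, mstep βA αA βH αH lam
    (if (k : ℕ) = 0 then x else ω ⟨(k : ℕ) - 1, Nat.lt_of_le_of_lt (Nat.sub_le _ _) k.2⟩) (ω k)

lemma gwStep_nonneg {β α : ℝ} (hβ : 0 < β) (hα : 0 < α) (x y : ℕ) : 0 ≤ gwStep β α x y := by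
  unfold gwStep
  positivity

lemma mstep_nonneg {βA αA βH αH lam : ℝ} (hβA : 0 < βA) (hβH : 0 < βH)
    (hαA : 0 < αA) (hαH : 0 < αH) (x y : ℕ) : 0 ≤ mstep βA αA βH αH lam x y :=
  mul_nonneg (Real.rpow_nonneg (gwStep_nonneg hβA hαA x y) _)
    (Real.rpow_nonneg (gwStep_nonneg hβH hαH x y) _)

lemma mpath_nonneg {βA αA βH αH lam : ℝ} (hβA : 0 < βA) (hβH : 0 < βH)
    (hαA : 0 < αA) (hαH : 0 < αH) (x n : ℕ) (ω : Fin n → ℕ) :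
    0 ≤ mpath βA αA βH αH lam x n ω :=
  Finset.prod_nonneg fun _ _ => mstep_nonneg hβA hβH hαA hαH _ _

lemma hellinger_eq {βA αA βH αH lam : ℝ} (hβA : 0 < βA) (hβH : 0 < βH)
    (hαA : 0 < αA) (hαH : 0 < αH) (x n : ℕ) :
    hellinger βA αA βH αH lam x n = ∑' ω : Fin n → ℕ, mpath βA αA βH αH lam x n ω := by
  unfold hellinger
  refine tsum_congr fun ω => ?_
  unfold gwPath mpath mstep
  rw [← Real.finset_prod_rpow _ _ (fun i _ => gwStep_nonneg hβA hαA _ _) lam,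
    ← Real.finset_prod_rpow _ _ (fun i _ => gwStep_nonneg hβH hαH _ _) (1 - lam),
    ← Finset.prod_mul_distrib]

lemma mpath_cons {βA αA βH αH lam : ℝ} (x n : ℕ) (y : ℕ) (ω : Fin n → ℕ) :
    mpath βA αA βH αH lam x (n + 1) (Fin.cons y ω)
      = mstep βA αA βH αH lam x y * mpath βA αA βH αH lam y n ω := by
  unfold mpath
  rw [Fin.prod_univ_succ]
  congr 1
  refine Finset.prod_congr rfl fun k _ => ?_
  rw [Fin.cons_succ]
  simp only [Fin.val_succ, Nat.add_sub_cancel]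
  rw [if_neg (Nat.succ_ne_zero _)]
  congr 1
  by_cases hk : (k : ℕ) = 0
  · have h0 : (⟨(k : ℕ), by omega⟩ : Fin (n+1)) = 0 := by ext; simp [hk]
    rw [h0, if_pos hk, Fin.cons_zero]
  · obtain ⟨m, hm⟩ : ∃ m, (k : ℕ) = m + 1 := ⟨(k:ℕ) - 1, by omega⟩
    have hmlt : m < n := by omega
    have h1 : (⟨(k : ℕ), by omega⟩ : Fin (n+1)) = Fin.succ ⟨m, hmlt⟩ := by ext; simp [hm]
    rw [h1, if_neg hk, Fin.cons_succ]
    congr 1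
    ext
    simp [hm]

lemma hasSum_expSeries (z : ℝ) :
    HasSum (fun y : ℕ => z ^ y / (Nat.factorial y : ℝ)) (Real.exp z) := by
  have h := NormedSpace.expSeries_div_hasSum_exp z
  rwa [← Real.exp_eq_exp_ℝ] at h

lemma rpow_gwterm {f t : ℝ} (hf : 0 < f) (y : ℕ) :
    (Real.exp (-f) * f ^ y / (Nat.factorial y : ℝ)) ^ t
      = Real.exp (-(t * f)) * (f ^ t) ^ y / ((Nat.factorial y : ℝ)) ^ t := by
  have hfac : (0:ℝ) < (Nat.factorial y : ℝ) := by positivity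
  rw [Real.div_rpow (by positivity) hfac.le,
    Real.mul_rpow (Real.exp_pos _).le (by positivity),
    ← Real.exp_mul, ← Real.rpow_natCast f y, ← Real.rpow_mul hf.le,
    mul_comm (y:ℝ) t, Real.rpow_mul hf.le, Real.rpow_natCast]
  ring_nf

lemma mstep_eq {βA αA βH αH lam : ℝ} (hβA : 0 < βA) (hβH : 0 < βH)
    (hαA : 0 < αA) (hαH : 0 < αH) (x y : ℕ) :
    mstep βA αA βH αH lam x y
      = Real.exp (-(lam * (βA*(x:ℝ)+αA) + (1-lam) * (βH*(x:ℝ)+αH)))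
        * ((βA*(x:ℝ)+αA) ^ lam * (βH*(x:ℝ)+αH) ^ (1-lam)) ^ y / (Nat.factorial y : ℝ) := by
  have hfA : (0:ℝ) < βA * (x:ℝ) + αA := by positivity
  have hfH : (0:ℝ) < βH * (x:ℝ) + αH := by positivity
  have hfac : (0:ℝ) < (Nat.factorial y : ℝ) := by positivity
  have hfacm : ((Nat.factorial y : ℝ)) ^ lam * ((Nat.factorial y : ℝ)) ^ (1-lam)
      = (Nat.factorial y : ℝ) := by
    rw [← Real.rpow_add hfac, add_sub_cancel, Real.rpow_one]
  unfold mstep gwStep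
  rw [rpow_gwterm hfA, rpow_gwterm hfH, neg_add, Real.exp_add, mul_pow, div_mul_div_comm,
    hfacm]
  ring

lemma mstep_mul_hasSum {βA αA βH αH lam : ℝ} (hβA : 0 < βA) (hβH : 0 < βH)
    (hαA : 0 < αA) (hαH : 0 < αH) (x : ℕ) (c : ℝ) :
    HasSum (fun y : ℕ => mstep βA αA βH αH lam x y * Real.exp (c * y))
      (Real.exp (((βA*(x:ℝ)+αA) ^ lam * (βH*(x:ℝ)+αH) ^ (1-lam)) * Real.exp c
        - (lam * (βA*(x:ℝ)+αA) + (1-lam) * (βH*(x:ℝ)+αH)))) := by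
  set fA := βA * (x:ℝ) + αA with hfA'
  set fH := βH * (x:ℝ) + αH with hfH'
  set g := fA ^ lam * fH ^ (1-lam) with hg
  set C := Real.exp (-(lam * fA + (1-lam) * fH)) with hC
  have h := (hasSum_expSeries (g * Real.exp c)).mul_left C
  have heq : (fun y : ℕ => C * ((g * Real.exp c) ^ y / (Nat.factorial y : ℝ)))
      = fun y : ℕ => mstep βA αA βH αH lam x y * Real.exp (c * y) := by
    funext y
    rw [mstep_eq hβA hβH hαA hαH, mul_pow, ← hfA', ← hfH', ← hg, ← hC,
      Real.exp_mul, Real.rpow_natCast]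
    ring
  rw [heq] at h
  convert h using 1
  case e'_3 => rfl
  rw [hC, ← Real.exp_add]
  ring_nf

lemma keyA {βA βH αA αH lam qE : ℝ} (hβA : 0 < βA) (hβH : 0 < βH)
    (hαA : 0 < αA) (hαH : 0 < αH) (hratio : βA / βH = αA / αH)
    (hqE : qE = βA ^ lam * βH ^ (1 - lam)) (x : ℝ) (hx : 0 ≤ x) :
    (βA*x+αA) ^ lam * (βH*x+αH) ^ (1-lam) = qE * (x + αA / βA) := by
  have hAH : βA * αH = αA * βH := (div_eq_div_iff hβH.ne' hαH.ne').mp hratio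
  have hfH : 0 < βH*x+αH := by positivity
  have hrew : βA*x+αA = (βA/βH) * (βH*x+αH) := by
    field_simp
    linear_combination -hAH
  have hαHr : αH = βH * (αA / βA) := by
    field_simp
    linear_combination hAH
  rw [hrew, Real.mul_rpow (by positivity) hfH.le, mul_assoc, ← Real.rpow_add hfH,
    add_sub_cancel, Real.rpow_one, Real.div_rpow hβA.le hβH.le, hqE,
    Real.rpow_sub hβH, Real.rpow_one]
  rw [hαHr]
  have hβHl : (0:ℝ) < βH ^ lam := Real.rpow_pos_of_pos hβH _
  field_simp

lemma keyB {βA βH αA αH lam βl : ℝ} (hβA : 0 < βA) (hβH : 0 < βH)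
    (hαA : 0 < αA) (hαH : 0 < αH) (hratio : βA / βH = αA / αH)
    (hβl : βl = lam * βA + (1 - lam) * βH) (x : ℝ) :
    lam * (βA*x+αA) + (1-lam) * (βH*x+αH) = βl * (x + αA / βA) := by
  have hAH : βA * αH = αA * βH := (div_eq_div_iff hβH.ne' hαH.ne').mp hratio
  have hαHr : αH = βH * (αA / βA) := by
    field_simp
    linear_combination hAH
  rw [hαHr, hβl]
  field_simp

lemma main_hasSum {βA βH αA αH lam qE βl : ℝ} (hβA : 0 < βA) (hβH : 0 < βH)
    (hαA : 0 < αA) (hαH : 0 < αH) (hratio : βA / βH = αA / αH)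
    (hqE : qE = βA ^ lam * βH ^ (1 - lam)) (hβl : βl = lam * βA + (1 - lam) * βH) :
    ∀ n : ℕ, ∀ x : ℕ, HasSum (mpath βA αA βH αH lam x n)
      (Real.exp (aSeq qE βl n * (x:ℝ) + (αA/βA) * ∑ k ∈ Finset.Icc 1 n, aSeq qE βl k)) := by
  intro n
  induction n with
  | zero =>
    intro x
    have h : HasSum (mpath βA αA βH αH lam x 0) (mpath βA αA βH αH lam x 0 default) :=
      hasSum_single _ (fun b hb => absurd (Subsingleton.elim b default) hb)
    simpa [mpath, aSeq] using h
  | succ n IH =>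
    intro x
    set r := αA / βA with hr
    set a := aSeq qE βl with ha
    set Sn := ∑ k ∈ Finset.Icc 1 n, a k with hSn
    set F : ℕ × (Fin n → ℕ) → ℝ :=
      fun p => mstep βA αA βH αH lam x p.1 * mpath βA αA βH αH lam p.1 n p.2 with hF
    have hF1 : ∀ y : ℕ, HasSum (fun ω => F (y, ω))
        (mstep βA αA βH αH lam x y * Real.exp (a n * (y:ℝ) + r * Sn)) :=
      fun y => (IH y).mul_left _
    have han1 : a (n+1) = qE * Real.exp (a n) - βl := rfl
    have hstep : HasSum (fun y : ℕ => mstep βA αA βH αH lam x y * Real.exp (a n * (y:ℝ) + r * Sn))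
        (Real.exp (a (n+1) * (x:ℝ) + r * a (n+1) + r * Sn)) := by
      have h := (mstep_mul_hasSum (lam := lam) hβA hβH hαA hαH x (a n)).mul_right (Real.exp (r * Sn))
      rw [keyA hβA hβH hαA hαH hratio hqE (x:ℝ) (Nat.cast_nonneg x),
        keyB hβA hβH hαA hαH hratio hβl (x:ℝ)] at h
      have h1 : (fun y : ℕ => mstep βA αA βH αH lam x y * Real.exp (a n * (y:ℝ)) * Real.exp (r * Sn))
          = fun y : ℕ => mstep βA αA βH αH lam x y * Real.exp (a n * (y:ℝ) + r * Sn) := by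
        funext y; rw [Real.exp_add]; ring
      rw [h1] at h
      convert h using 1
      case e'_3 => rfl
      rw [← Real.exp_add, han1, hr]
      ring
    have hFnonneg : ∀ p, 0 ≤ F p :=
      fun p => mul_nonneg (mstep_nonneg hβA hβH hαA hαH _ _) (mpath_nonneg hβA hβH hαA hαH _ _ _)
    have hslice : ∀ y, Summable fun ω => F (y, ω) := fun y => (hF1 y).summable
    have hsumF : Summable F := by
      refine (summable_prod_of_nonneg hFnonneg).mpr ⟨hslice, ?_⟩
      have : (fun y => ∑' ω, F (y, ω))
          = fun y => mstep βA αA βH αH lam x y * Real.exp (a n * (y:ℝ) + r * Sn) := by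
        funext y; exact (hF1 y).tsum_eq
      rw [this]
      exact hstep.summable
    have htsum : ∑' p, F p = Real.exp (a (n+1) * (x:ℝ) + r * a (n+1) + r * Sn) := by
      rw [Summable.tsum_prod' hsumF hslice]
      calc ∑' (y : ℕ), ∑' ω, F (y, ω)
          = ∑' (y : ℕ), mstep βA αA βH αH lam x y * Real.exp (a n * (y:ℝ) + r * Sn) :=
            tsum_congr fun y => (hF1 y).tsum_eq
        _ = _ := hstep.tsum_eq
    have hFhas : HasSum F (Real.exp (a (n+1) * (x:ℝ) + r * a (n+1) + r * Sn)) :=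
      hsumF.hasSum_iff.mpr htsum
    have hcomp : mpath βA αA βH αH lam x (n+1) ∘ (Fin.consEquiv fun _ : Fin (n+1) => ℕ) = F := by
      funext p
      cases p with
      | mk y ω => exact mpath_cons x n y ω
    have hmain : HasSum (mpath βA αA βH αH lam x (n+1))
        (Real.exp (a (n+1) * (x:ℝ) + r * a (n+1) + r * Sn)) :=
      ((Fin.consEquiv fun _ : Fin (n+1) => ℕ).hasSum_iff).mp (hcomp ▸ hFhas)
    convert hmain using 2
    rw [Finset.sum_Icc_succ_top (by omega : 1 ≤ n + 1), hSn]
    ring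

lemma aSeq_succ_lt {qE βl : ℝ} (hq : 0 < qE) (hlt : qE < βl) :
    ∀ n, aSeq qE βl (n+1) < aSeq qE βl n := by
  intro n
  induction n with
  | zero => simp only [aSeq, Real.exp_zero, mul_one]; linarith
  | succ n IH =>
    show qE * Real.exp (aSeq qE βl (n+1)) - βl < qE * Real.exp (aSeq qE βl n) - βl
    have := Real.exp_lt_exp.mpr IH
    nlinarith

lemma aSeq_strictAnti {qE βl : ℝ} (hq : 0 < qE) (hlt : qE < βl) :
    StrictAnti (aSeq qE βl) :=
  strictAnti_nat_of_succ_lt (aSeq_succ_lt hq hlt)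

lemma aSeq_nonpos {qE βl : ℝ} (hq : 0 < qE) (hlt : qE < βl) (n : ℕ) :
    aSeq qE βl n ≤ 0 := by
  have h0 : aSeq qE βl 0 = 0 := rfl
  cases n with
  | zero => simp [h0]
  | succ n => exact le_of_lt (h0 ▸ aSeq_strictAnti hq hlt (Nat.succ_pos n))

lemma aSeq_gt_x₀ {qE βl x₀ : ℝ} (hq : 0 < qE) (hx₀neg : x₀ < 0)
    (hx₀fix : qE * Real.exp x₀ - βl = x₀) : ∀ n, x₀ < aSeq qE βl n := by
  intro n
  induction n with
  | zero => exact hx₀neg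
  | succ n IH =>
    show x₀ < qE * Real.exp (aSeq qE βl n) - βl
    have := Real.exp_lt_exp.mpr IH
    nlinarith

lemma aSeq_tendsto {qE βl x₀ : ℝ} (hq : 0 < qE) (hlt : qE < βl) (hx₀neg : x₀ < 0)
    (hx₀fix : qE * Real.exp x₀ - βl = x₀) :
    Tendsto (aSeq qE βl) atTop (nhds x₀) := by
  have hbdd : BddBelow (Set.range (aSeq qE βl)) := by
    refine ⟨x₀, ?_⟩
    rintro _ ⟨n, rfl⟩
    exact (aSeq_gt_x₀ hq hx₀neg hx₀fix n).le
  set L := ⨅ n, aSeq qE βl n with hL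
  have htend : Tendsto (aSeq qE βl) atTop (nhds L) :=
    tendsto_atTop_ciInf (aSeq_strictAnti hq hlt).antitone hbdd
  have hx₀L : x₀ ≤ L := le_ciInf fun n => (aSeq_gt_x₀ hq hx₀neg hx₀fix n).le
  have hL1 : L ≤ aSeq qE βl 1 := ciInf_le hbdd 1
  have ha1 : aSeq qE βl 1 = qE - βl := by
    simp [aSeq, Real.exp_zero]
  have hLneg : L < 0 := by rw [ha1] at hL1; linarith
  have hfixL : qE * Real.exp L - βl = L := by
    have h1 : Tendsto (fun n => aSeq qE βl (n+1)) atTop (nhds L) :=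
      htend.comp (tendsto_add_atTop_nat 1)
    have h2 : Tendsto (fun n => qE * Real.exp (aSeq qE βl n) - βl) atTop
        (nhds (qE * Real.exp L - βl)) :=
      (((Real.continuous_exp.tendsto L).comp htend).const_mul qE).sub tendsto_const_nhds
    exact tendsto_nhds_unique h2 h1
  have hLx₀ : L = x₀ := by
    by_contra hne
    have hx₀lt : x₀ < L := lt_of_le_of_ne hx₀L (Ne.symm hne)
    set t := L / x₀ with ht
    have htx : t * x₀ = L := div_mul_cancel₀ L hx₀neg.ne
    have ht0 : 0 < t := div_pos_of_neg_of_neg hLneg hx₀neg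
    have ht1 : t < 1 := by nlinarith
    have hconv := strictConvexOn_exp.2 (Set.mem_univ x₀) (Set.mem_univ (0:ℝ))
      hx₀neg.ne ht0 (by linarith : (0:ℝ) < 1 - t) (by ring)
    simp only [smul_eq_mul, mul_zero, add_zero, Real.exp_zero, mul_one] at hconv
    rw [htx] at hconv
    nlinarith [mul_lt_mul_of_pos_left hconv hq, mul_pos (sub_pos.mpr ht1) (sub_pos.mpr hlt)]
  rwa [hLx₀] at htend

lemma qE_lt_βl {βA βH lam qE βl : ℝ} (hβA : 0 < βA) (hβH : 0 < βH) (hβne : βA ≠ βH)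
    (hlam0 : 0 < lam) (hlam1 : lam < 1)
    (hqE : qE = βA ^ lam * βH ^ (1 - lam)) (hβl : βl = lam * βA + (1 - lam) * βH) :
    qE < βl := by
  have hlogne : Real.log βA ≠ Real.log βH := fun h =>
    hβne (by rw [← Real.exp_log hβA, h, Real.exp_log hβH])
  have h := strictConvexOn_exp.2 (Set.mem_univ (Real.log βA)) (Set.mem_univ (Real.log βH))
    hlogne hlam0 (by linarith : (0:ℝ) < 1 - lam) (by ring)
  simp only [smul_eq_mul, Real.exp_log hβA, Real.exp_log hβH] at h
  rw [Real.exp_add, mul_comm lam, mul_comm (1 - lam), ← Real.rpow_def_of_pos hβA,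
    ← Real.rpow_def_of_pos hβH] at h
  rw [hqE, hβl]
  exact h

end HellAux

open HellAux in
/-- Detailed behaviour of the Hellinger integrals in the equal-fraction case
`P_SP,1` (strictly positive parameters, `β_A ≠ β_H`, `α_A ≠ α_H`, `β_A/β_H = α_A/α_H`):
exact value, strict decrease, vanishing limit, and exponential decay rate `(α_A/β_A)·x₀`. -/
theorem hellinger_SP1_detailed (βA βH αA αH lam : ℝ)
    (hβA : 0 < βA) (hβH : 0 < βH) (hαA : 0 < αA) (hαH : 0 < αH)
    (hβne : βA ≠ βH) (hαne : αA ≠ αH) (hratio : βA / βH = αA / αH)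
    (hlam : lam ∈ Set.Ioo (0 : ℝ) 1) (ω₀ : ℕ) (hω₀ : 1 ≤ ω₀)
    (qE βl : ℝ) (hqE : qE = βA ^ lam * βH ^ (1 - lam)) (hβl : βl = lam * βA + (1 - lam) * βH)
    (x₀ : ℝ) (hx₀neg : x₀ < 0) (hx₀fix : qE * Real.exp x₀ - βl = x₀) :
    (0 < qE ∧ qE < βl) ∧
    (hellinger βA αA βH αH lam ω₀ 1
        = Real.exp ((βA ^ lam * βH ^ (1 - lam) - lam * βA - (1 - lam) * βH)
            * ((ω₀ : ℝ) + αA / βA)) ∧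
      hellinger βA αA βH αH lam ω₀ 1 < 1) ∧
    (∀ n : ℕ, 1 ≤ n →
      hellinger βA αA βH αH lam ω₀ n
        = Real.exp (aSeq qE βl n * (ω₀ : ℝ) + (αA / βA) * ∑ k ∈ Finset.Icc 1 n, aSeq qE βl k)) ∧
    (∀ n : ℕ, 1 ≤ n → hellinger βA αA βH αH lam ω₀ (n + 1) < hellinger βA αA βH αH lam ω₀ n) ∧
    Tendsto (fun n : ℕ => hellinger βA αA βH αH lam ω₀ n) atTop (nhds 0) ∧
    Tendsto (fun n : ℕ => (1 / (n : ℝ)) * Real.log (hellinger βA αA βH αH lam ω₀ n)) atTop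
      (nhds ((αA / βA) * x₀)) := by
  obtain ⟨hlam0, hlam1⟩ := hlam
  have hq0 : 0 < qE := by rw [hqE]; positivity
  have hqlt : qE < βl := qE_lt_βl hβA hβH hβne hlam0 hlam1 hqE hβl
  have hr0 : 0 < αA / βA := by positivity
  have hω₀R : (1:ℝ) ≤ (ω₀:ℝ) := by exact_mod_cast hω₀
  set a := aSeq qE βl with ha
  -- the exact formula, valid for every n
  have formula : ∀ n : ℕ, hellinger βA αA βH αH lam ω₀ n
      = Real.exp (a n * (ω₀ : ℝ) + (αA / βA) * ∑ k ∈ Finset.Icc 1 n, a k) := by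
    intro n
    rw [hellinger_eq hβA hβH hαA hαH]
    exact (main_hasSum hβA hβH hαA hαH hratio hqE hβl n ω₀).tsum_eq
  have ha1 : a 1 = qE - βl := by simp [ha, aSeq, Real.exp_zero]
  have ha1neg : a 1 < 0 := by rw [ha1]; linarith
  have hanonpos : ∀ n, a n ≤ 0 := aSeq_nonpos hq0 hqlt
  have hastrict : StrictAnti a := aSeq_strictAnti hq0 hqlt
  have hale : ∀ n, 1 ≤ n → a n ≤ a 1 := fun n hn => hastrict.antitone hn
  refine ⟨⟨hq0, hqlt⟩, ⟨?_, ?_⟩, fun n _ => formula n, ?_, ?_, ?_⟩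
  · rw [formula 1]
    congr 1
    rw [Finset.Icc_self, Finset.sum_singleton, ha1, hqE, hβl]
    ring
  · rw [formula 1, Finset.Icc_self, Finset.sum_singleton, ha1]
    rw [Real.exp_lt_one_iff]
    nlinarith
  · intro n hn
    rw [formula n, formula (n+1), Real.exp_lt_exp]
    rw [Finset.sum_Icc_succ_top (by omega : 1 ≤ n + 1)]
    have h1 : a (n+1) < a n := aSeq_succ_lt hq0 hqlt n
    have h2 : a (n+1) < 0 := lt_of_lt_of_le h1 (hanonpos n)
    nlinarith
  · have hE : Tendsto (fun n : ℕ => a n * (ω₀ : ℝ) + (αA / βA) * ∑ k ∈ Finset.Icc 1 n, a k)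
        atTop atBot := by
      have hbound : ∀ n : ℕ, a n * (ω₀ : ℝ) + (αA / βA) * ∑ k ∈ Finset.Icc 1 n, a k
          ≤ (n : ℝ) * ((αA / βA) * a 1) := by
        intro n
        have hsum : ∑ k ∈ Finset.Icc 1 n, a k ≤ (n : ℝ) * a 1 := by
          have := Finset.sum_le_card_nsmul (Finset.Icc 1 n) a (a 1)
            (fun k hk => hale k (Finset.mem_Icc.mp hk).1)
          rw [Nat.card_Icc] at this
          simpa [nsmul_eq_mul] using this
        have h1 : a n * (ω₀ : ℝ) ≤ 0 :=
          mul_nonpos_of_nonpos_of_nonneg (hanonpos n) (by positivity)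
        nlinarith
      have hlin : Tendsto (fun n : ℕ => (n : ℝ) * ((αA / βA) * a 1)) atTop atBot := by
        apply Tendsto.atTop_mul_const_of_neg (by nlinarith : (αA / βA) * a 1 < 0)
        exact tendsto_natCast_atTop_atTop
      exact tendsto_atBot_mono hbound hlin
    have := Real.tendsto_exp_atBot.comp hE
    refine Tendsto.congr (fun n => ?_) this
    exact (formula n).symm
  · have hatend : Tendsto a atTop (nhds x₀) := aSeq_tendsto hq0 hqlt hx₀neg hx₀fix
    have T1 : Tendsto (fun n : ℕ => a n * (ω₀ : ℝ) * (1 / (n : ℝ))) atTop (nhds 0) := by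
      have := (hatend.mul_const (ω₀ : ℝ)).mul tendsto_one_div_atTop_nhds_zero_nat
      simpa using this
    have T2 : Tendsto (fun n : ℕ => (1 / (n : ℝ)) * ∑ k ∈ Finset.Icc 1 n, a k) atTop
        (nhds x₀) := by
      have hshift : Tendsto (fun i : ℕ => a (1 + i)) atTop (nhds x₀) := by
        have := hatend.comp (tendsto_add_atTop_nat 1)
        simpa [Function.comp_def, add_comm] using this
      have hces := hshift.cesaro
      refine Tendsto.congr (fun n => ?_) hces
      rw [← Finset.Ico_add_one_right_eq_Icc, Finset.sum_Ico_eq_sum_range]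
      simp [one_div]
    have := T1.add (T2.const_mul (αA / βA))
    rw [zero_add] at this
    refine Tendsto.congr' ?_ this
    filter_upwards [eventually_ge_atTop 1] with n hn
    rw [formula n, Real.log_exp]
    ring
end
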